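/- (Monotonicity of the Abelian sandpile scaling limit) Let d ≥ 2 and for each n ∈ ℕ let u_n : ℤ^d → ℤ_{≥0} be the Abelian sandpile odometer for n chips at the origin. Suppose u₀ : ℝ^d ∖ {0} → [0,∞) is continuous and the rescaled odometers converge to u₀ locally uniformly in ℝ^d ∖ {0}: for every compact K ⊆ ℝ^d ∖ {0}, sup {|n^{−2/d}·u_n(ξ) − u₀(n^{−1/d}·ξ)| : ξ ∈ ℤ^d, n^{−1/d}·ξ ∈ K} → 0 as n → ∞. Then for every e ∈ 𝒩 and all x¹, x² ∈ ℝ^d ∖ {0} such that x¹ − x² is a nonzero real multiple of e, if |x¹| ≤ |x²| then u₀(x¹) ≥ u₀(x²). -/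

import Mathlib

open Filter

namespace Sandpile

/-- Lattice sites of `ℤ^d`. -/
abbrev Site (d : ℕ) := Fin d → ℤ

/-- Two sites are neighbours iff their `ℓ¹`-distance equals `1`. -/
def nbr {d : ℕ} (x y : Site d) : Prop := (∑ i, |x i - y i|) = 1

/-- The (combinatorial) boundary of a set `V ⊆ ℤ^d`. -/
def bdry {d : ℕ} (V : Set (Site d)) : Set (Site d) :=
  {x | x ∈ V ∧ ∃ y, nbr x y ∧ y ∉ V}

/-- The (combinatorial) interior of a set `V ⊆ ℤ^d`. -/
def intr {d : ℕ} (V : Set (Site d)) : Set (Site d) := V \ bdry V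

/-- The discrete Laplacian `Δu(x) = (1/(2d)) ∑_{y ∼ x} (u y - u x)`; the `2d`
neighbours of `x` are exactly the points `x ± eᵢ`. -/
noncomputable def lap {d : ℕ} (u : Site d → ℝ) (x : Site d) : ℝ :=
  (1 / (2 * (d : ℝ))) *
    ∑ i : Fin d, ((u (x + Pi.single i 1) - u x) + (u (x - Pi.single i 1) - u x))

/-- A mass distribution: nonnegative with finite support. -/
def IsMassDist {d : ℕ} (μ : Site d → ℝ) : Prop :=
  (∀ x, 0 ≤ μ x) ∧ (Function.support μ).Finite

/-- Euclidean norm of a lattice point. -/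
noncomputable def enorm {d : ℕ} (x : Site d) : ℝ :=
  Real.sqrt (∑ i, ((x i : ℝ)) ^ 2)

/-- Membership in the class `W_n` of the least action principle for the Abelian
sandpile: `w : ℤ^d → ℤ_{≥0}` with `n·δ₀(x) + 2d·Δw(x) ≤ 2d - 1` for all `x ∈ ℤ^d`. -/
def InASMClass (d n : ℕ) (w : Site d → ℕ) : Prop :=
  ∀ x : Site d,
    (n : ℝ) * (if x = 0 then 1 else 0) +
      2 * (d : ℝ) * lap (fun y => (w y : ℝ)) x ≤ 2 * (d : ℝ) - 1

/-- The set of directions `𝒩 ⊆ ℝ^d`. -/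
def dirNR (d : ℕ) : Set (Fin d → ℝ) :=
  {v | ∃ i j : Fin d, i ≠ j ∧
    (v = Pi.single i 1 ∨ v = Pi.single i 1 + Pi.single j 1 ∨
      v = Pi.single i 1 - Pi.single j 1)}

/-- Euclidean norm on `ℝ^d`. -/
noncomputable def renorm {d : ℕ} (x : Fin d → ℝ) : ℝ :=
  Real.sqrt (∑ i, (x i) ^ 2)

/- AUX START -/
section Aux

lemma single_app {d : ℕ} (k l : Fin d) :
    (Pi.single k 1 : Site d) l = if l = k then 1 else 0 := by
  simp [Pi.single_apply]

lemma lap_mono {d : ℕ} {f g : Site d → ℝ} {x : Site d}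
    (hx : f x = g x)
    (hnb : ∀ i : Fin d, f (x + Pi.single i 1) ≤ g (x + Pi.single i 1) ∧
      f (x - Pi.single i 1) ≤ g (x - Pi.single i 1)) :
    lap f x ≤ lap g x := by
  unfold lap
  apply mul_le_mul_of_nonneg_left _ (by positivity)
  apply Finset.sum_le_sum
  intro i _
  have h1 := (hnb i).1
  have h2 := (hnb i).2
  rw [hx]
  linarith

lemma reflect_key {d n : ℕ} (u : Site d → ℕ) (hu : InASMClass d n u)
    (hleast : ∀ w : Site d → ℕ, InASMClass d n w → ∀ x, u x ≤ w x)
    (R : Site d → Site d) (h : Site d → ℤ) (m : ℤ)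
    (hRR : ∀ x, R (R x) = x)
    (hlap : ∀ (f : Site d → ℝ) (x : Site d), lap (fun y => f (R y)) x = lap f (R x))
    (hRF : ∀ x, m ≤ h x → h (R x) ≤ m - 1)
    (hcross : ∀ x y, m ≤ h x → h y ≤ m - 1 →
      (∃ i : Fin d, y = x + Pi.single i 1 ∨ y = x - Pi.single i 1) →
      R y = y ∨ y = R x)
    (h0 : h 0 ≤ m - 1) :
    ∀ x, m ≤ h x → u x ≤ u (R x) := by
  classical
  set w : Site d → ℕ := fun x => if m ≤ h x then min (u x) (u (R x)) else u x with hw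
  have hwle : ∀ y, w y ≤ u y := by
    intro y; by_cases hy : m ≤ h y <;> simp [hw, hy]
  have hwin : InASMClass d n w := by
    intro x
    by_cases hx : m ≤ h x ∧ u (R x) < u x
    · obtain ⟨hx1, hx2⟩ := hx
      have hx0 : x ≠ 0 := by
        intro hx0; rw [hx0] at hx1; omega
      have hwx : w x = u (R x) := by simp [hw, hx1, min_eq_right (le_of_lt hx2)]
      have hwley : ∀ y, (∃ i : Fin d, y = x + Pi.single i 1 ∨ y = x - Pi.single i 1) →
          w y ≤ u (R y) := by
        intro y hyn
        by_cases hy : m ≤ h y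
        · simp only [hw, if_pos hy]; exact min_le_right _ _
        · rcases hcross x y hx1 (by omega) hyn with h1 | h1
          · simp [hw, hy, h1]
          · have : w y = u (R x) := by
              rw [h1]; show (if m ≤ h (R x) then u (R x) ⊓ u (R (R x)) else u (R x)) = u (R x)
              rw [if_neg (by have := hRF x hx1; omega)]
            rw [this, h1, hRR]
            exact le_of_lt hx2
      have hlaple : lap (fun y => (w y : ℝ)) x ≤ lap (fun y => (u (R y) : ℝ)) x := by
        apply lap_mono (by rw [hwx])
        intro i
        exact ⟨by exact_mod_cast hwley _ ⟨i, Or.inl rfl⟩,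
               by exact_mod_cast hwley _ ⟨i, Or.inr rfl⟩⟩
      rw [hlap (fun y => (u y : ℝ)) x] at hlaple
      have hur := hu (R x)
      have hind : (0:ℝ) ≤ (n : ℝ) * (if R x = 0 then 1 else 0) := by
        have : (0:ℝ) ≤ (if R x = 0 then (1:ℝ) else 0) := by split <;> norm_num
        positivity
      have hmul : 2 * (d:ℝ) * lap (fun y => (w y : ℝ)) x ≤
          2 * (d:ℝ) * lap (fun y => (u y : ℝ)) (R x) :=
        mul_le_mul_of_nonneg_left hlaple (by positivity)
      simp only [if_neg hx0]
      linarith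
    · have hx' : m ≤ h x → u x ≤ u (R x) := by
        intro h1; by_contra h2; exact hx ⟨h1, by omega⟩
      have hwx : w x = u x := by
        by_cases h1 : m ≤ h x
        · simp [hw, h1, min_eq_left (hx' h1)]
        · simp [hw, h1]
      have hlaple : lap (fun y => (w y : ℝ)) x ≤ lap (fun y => (u y : ℝ)) x := by
        apply lap_mono (by rw [hwx])
        intro i
        exact ⟨by exact_mod_cast hwle _, by exact_mod_cast hwle _⟩
      have hux := hu x
      have hmul : 2 * (d:ℝ) * lap (fun y => (w y : ℝ)) x ≤
          2 * (d:ℝ) * lap (fun y => (u y : ℝ)) x :=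
        mul_le_mul_of_nonneg_left hlaple (by positivity)
      linarith
  intro x hx
  have := hleast w hwin x
  simp only [hw, if_pos hx, le_min_iff] at this
  exact this.2

/-- Reflection of type A : coordinate `i ↦ a - xᵢ`. -/
def RA {d : ℕ} (i : Fin d) (a : ℤ) (x : Site d) : Site d :=
  Function.update x i (a - x i)

/-- Reflection of type B (for direction `eᵢ - eⱼ`). -/
def RB {d : ℕ} (i j : Fin d) (s : ℤ) (x : Site d) : Site d :=
  fun l => if l = i then x j + s else if l = j then x i - s else x l

/-- Reflection of type C (for direction `eᵢ + eⱼ`). -/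
def RC {d : ℕ} (i j : Fin d) (s : ℤ) (x : Site d) : Site d :=
  fun l => if l = i then s - x j else if l = j then s - x i else x l

lemma RA_apply {d : ℕ} (i : Fin d) (a : ℤ) (x : Site d) (l : Fin d) :
    RA i a x l = if l = i then a - x i else x l := by
  simp [RA, Function.update_apply]

lemma RA_add {d : ℕ} (i k : Fin d) (hk : k ≠ i) (a : ℤ) (x : Site d) :
    RA i a (x + Pi.single k 1) = RA i a x + Pi.single k 1 := by
  funext l
  simp only [RA_apply, Pi.add_apply, Pi.single_apply]
  by_cases hl : l = i <;> simp [hl, hk, Ne.symm hk]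

lemma RA_sub {d : ℕ} (i k : Fin d) (hk : k ≠ i) (a : ℤ) (x : Site d) :
    RA i a (x - Pi.single k 1) = RA i a x - Pi.single k 1 := by
  funext l
  simp only [RA_apply, Pi.sub_apply, Pi.single_apply]
  by_cases hl : l = i <;> simp [hl, hk, Ne.symm hk]

lemma RA_addi {d : ℕ} (i : Fin d) (a : ℤ) (x : Site d) :
    RA i a (x + Pi.single i 1) = RA i a x - Pi.single i 1 := by
  funext l
  simp only [RA_apply, Pi.add_apply, Pi.sub_apply, Pi.single_apply]
  by_cases hl : l = i
  · simp [hl]; ring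
  · simp [hl]

lemma RA_subi {d : ℕ} (i : Fin d) (a : ℤ) (x : Site d) :
    RA i a (x - Pi.single i 1) = RA i a x + Pi.single i 1 := by
  funext l
  simp only [RA_apply, Pi.add_apply, Pi.sub_apply, Pi.single_apply]
  by_cases hl : l = i
  · simp [hl]; ring
  · simp [hl]

lemma lapA {d : ℕ} (i : Fin d) (a : ℤ) (f : Site d → ℝ) (x : Site d) :
    lap (fun y => f (RA i a y)) x = lap f (RA i a x) := by
  unfold lap
  congr 1
  apply Finset.sum_congr rfl
  intro k _
  by_cases hk : k = i
  · subst hk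
    simp only [RA_addi, RA_subi]
    ring
  · simp only [RA_add i k hk, RA_sub i k hk]

section BC
variable {d : ℕ} (i j : Fin d) (s : ℤ)

lemma RB_add (k : Fin d) (hki : k ≠ i) (hkj : k ≠ j) (x : Site d) :
    RB i j s (x + Pi.single k 1) = RB i j s x + Pi.single k 1 := by
  funext l
  simp only [RB, Pi.add_apply, Pi.single_apply]
  by_cases h1 : l = i <;> by_cases h2 : l = j <;>
    simp_all [Ne.symm hki, Ne.symm hkj] <;> omega

lemma RB_sub (k : Fin d) (hki : k ≠ i) (hkj : k ≠ j) (x : Site d) :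
    RB i j s (x - Pi.single k 1) = RB i j s x - Pi.single k 1 := by
  funext l
  simp only [RB, Pi.sub_apply, Pi.single_apply]
  by_cases h1 : l = i <;> by_cases h2 : l = j <;>
    simp_all [Ne.symm hki, Ne.symm hkj] <;> omega

lemma RB_addi (x : Site d) :
    RB i j s (x + Pi.single i 1) = RB i j s x + Pi.single j 1 := by
  funext l
  simp only [RB, Pi.add_apply, Pi.single_apply]
  by_cases h1 : l = i <;> by_cases h2 : l = j <;> simp_all <;> omega

lemma RB_subi (x : Site d) :
    RB i j s (x - Pi.single i 1) = RB i j s x - Pi.single j 1 := by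
  funext l
  simp only [RB, Pi.sub_apply, Pi.single_apply]
  by_cases h1 : l = i <;> by_cases h2 : l = j <;> simp_all <;> omega

lemma RB_addj (x : Site d) :
    RB i j s (x + Pi.single j 1) = RB i j s x + Pi.single i 1 := by
  funext l
  simp only [RB, Pi.add_apply, Pi.single_apply]
  by_cases h1 : l = i <;> by_cases h2 : l = j <;> simp_all <;> omega

lemma RB_subj (x : Site d) :
    RB i j s (x - Pi.single j 1) = RB i j s x - Pi.single i 1 := by
  funext l
  simp only [RB, Pi.sub_apply, Pi.single_apply]
  by_cases h1 : l = i <;> by_cases h2 : l = j <;> simp_all <;> omega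

lemma RC_add (k : Fin d) (hki : k ≠ i) (hkj : k ≠ j) (x : Site d) :
    RC i j s (x + Pi.single k 1) = RC i j s x + Pi.single k 1 := by
  funext l
  simp only [RC, Pi.add_apply, Pi.single_apply]
  by_cases h1 : l = i <;> by_cases h2 : l = j <;>
    simp_all [Ne.symm hki, Ne.symm hkj] <;> omega

lemma RC_sub (k : Fin d) (hki : k ≠ i) (hkj : k ≠ j) (x : Site d) :
    RC i j s (x - Pi.single k 1) = RC i j s x - Pi.single k 1 := by
  funext l
  simp only [RC, Pi.sub_apply, Pi.single_apply]
  by_cases h1 : l = i <;> by_cases h2 : l = j <;>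
    simp_all [Ne.symm hki, Ne.symm hkj] <;> omega

lemma RC_addi (x : Site d) :
    RC i j s (x + Pi.single i 1) = RC i j s x - Pi.single j 1 := by
  funext l
  simp only [RC, Pi.add_apply, Pi.sub_apply, Pi.single_apply]
  by_cases h1 : l = i <;> by_cases h2 : l = j <;> simp_all <;> omega

lemma RC_subi (x : Site d) :
    RC i j s (x - Pi.single i 1) = RC i j s x + Pi.single j 1 := by
  funext l
  simp only [RC, Pi.add_apply, Pi.sub_apply, Pi.single_apply]
  by_cases h1 : l = i <;> by_cases h2 : l = j <;> simp_all <;> omega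

lemma RC_addj (x : Site d) :
    RC i j s (x + Pi.single j 1) = RC i j s x - Pi.single i 1 := by
  funext l
  simp only [RC, Pi.add_apply, Pi.sub_apply, Pi.single_apply]
  by_cases h1 : l = i <;> by_cases h2 : l = j <;> simp_all <;> omega

lemma RC_subj (x : Site d) :
    RC i j s (x - Pi.single j 1) = RC i j s x + Pi.single i 1 := by
  funext l
  simp only [RC, Pi.add_apply, Pi.sub_apply, Pi.single_apply]
  by_cases h1 : l = i <;> by_cases h2 : l = j <;> simp_all <;> omega

lemma lapB (f : Site d → ℝ) (x : Site d) :
    lap (fun y => f (RB i j s y)) x = lap f (RB i j s x) := by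
  unfold lap
  congr 1
  apply Fintype.sum_equiv (Equiv.swap i j)
  intro k
  by_cases hki : k = i
  · rw [hki, Equiv.swap_apply_left]
    simp only [RB_addi, RB_subi]
  · by_cases hkj : k = j
    · rw [hkj, Equiv.swap_apply_right]
      simp only [RB_addj, RB_subj]
    · rw [Equiv.swap_apply_of_ne_of_ne hki hkj]
      simp only [RB_add i j s k hki hkj, RB_sub i j s k hki hkj]

lemma lapC (f : Site d → ℝ) (x : Site d) :
    lap (fun y => f (RC i j s y)) x = lap f (RC i j s x) := by
  unfold lap
  congr 1
  apply Fintype.sum_equiv (Equiv.swap i j)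
  intro k
  by_cases hki : k = i
  · rw [hki, Equiv.swap_apply_left]
    simp only [RC_addi, RC_subi]
    ring
  · by_cases hkj : k = j
    · rw [hkj, Equiv.swap_apply_right]
      simp only [RC_addj, RC_subj]
      ring
    · rw [Equiv.swap_apply_of_ne_of_ne hki hkj]
      simp only [RC_add i j s k hki hkj, RC_sub i j s k hki hkj]

end BC

lemma RA_fix {d : ℕ} (i : Fin d) (a : ℤ) (y : Site d) (h : y i + y i = a) :
    RA i a y = y := by
  funext l; rw [RA_apply]; by_cases hl : l = i
  · subst hl; simp; omega
  · simp [hl]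

lemma RA_invol {d : ℕ} (i : Fin d) (a : ℤ) (x : Site d) :
    RA i a (RA i a x) = x := by
  funext l; simp only [RA_apply]
  by_cases hl : l = i
  · subst hl; simp
  · simp [hl]

lemma RB_fix {d : ℕ} (i j : Fin d) (hij : i ≠ j) (s : ℤ) (y : Site d)
    (h : y i - y j = s) : RB i j s y = y := by
  funext l; simp only [RB]
  by_cases h1 : l = i
  · subst h1; simp; omega
  · by_cases h2 : l = j
    · subst h2; simp [h1]; omega
    · simp [h1, h2]

lemma RB_invol {d : ℕ} (i j : Fin d) (hij : i ≠ j) (s : ℤ) (x : Site d) :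
    RB i j s (RB i j s x) = x := by
  funext l; simp only [RB]
  by_cases h1 : l = i
  · subst h1; simp [hij, Ne.symm hij]
  · by_cases h2 : l = j
    · subst h2; simp [h1, hij, Ne.symm hij]
    · simp [h1, h2]

lemma RC_fix {d : ℕ} (i j : Fin d) (hij : i ≠ j) (s : ℤ) (y : Site d)
    (h : y i + y j = s) : RC i j s y = y := by
  funext l; simp only [RC]
  by_cases h1 : l = i
  · subst h1; simp; omega
  · by_cases h2 : l = j
    · subst h2; simp [h1]; omega
    · simp [h1, h2]

lemma RC_invol {d : ℕ} (i j : Fin d) (hij : i ≠ j) (s : ℤ) (x : Site d) :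
    RC i j s (RC i j s x) = x := by
  funext l; simp only [RC]
  by_cases h1 : l = i
  · subst h1; simp [hij, Ne.symm hij]
  · by_cases h2 : l = j
    · subst h2; simp [h1, hij, Ne.symm hij]
    · simp [h1, h2]

lemma stepA_plus {d : ℕ} (i k : Fin d) (x : Site d) :
    ((x + Pi.single k 1 : Site d)) i = x i ∨ ((x + Pi.single k 1 : Site d)) i = x i + 1 := by
  by_cases hik : i = k
  · right; simp [single_app, hik]
  · left; simp [single_app, hik]

lemma stepA_minus {d : ℕ} (i k : Fin d) (x : Site d) :
    ((x - Pi.single k 1 : Site d)) i = x i ∨ ((x - Pi.single k 1 : Site d)) i = x i - 1 := by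
  by_cases hik : i = k
  · right; simp [single_app, hik]
  · left; simp [single_app, hik]

lemma stepBC_plus {d : ℕ} (i j k : Fin d) (hij : i ≠ j) (x : Site d) :
    (((x + Pi.single k 1 : Site d)) i = x i ∧ ((x + Pi.single k 1 : Site d)) j = x j) ∨
    (((x + Pi.single k 1 : Site d)) i = x i + 1 ∧ ((x + Pi.single k 1 : Site d)) j = x j) ∨
    (((x + Pi.single k 1 : Site d)) i = x i ∧ ((x + Pi.single k 1 : Site d)) j = x j + 1) := by
  by_cases hik : i = k
  · subst hik
    exact Or.inr (Or.inl ⟨by simp [single_app], by simp [single_app, Ne.symm hij]⟩)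
  · by_cases hjk : j = k
    · subst hjk
      exact Or.inr (Or.inr ⟨by simp [single_app, hik], by simp [single_app]⟩)
    · exact Or.inl ⟨by simp [single_app, hik], by simp [single_app, hjk]⟩

lemma stepBC_minus {d : ℕ} (i j k : Fin d) (hij : i ≠ j) (x : Site d) :
    (((x - Pi.single k 1 : Site d)) i = x i ∧ ((x - Pi.single k 1 : Site d)) j = x j) ∨
    (((x - Pi.single k 1 : Site d)) i = x i - 1 ∧ ((x - Pi.single k 1 : Site d)) j = x j) ∨
    (((x - Pi.single k 1 : Site d)) i = x i ∧ ((x - Pi.single k 1 : Site d)) j = x j - 1) := by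
  by_cases hik : i = k
  · subst hik
    exact Or.inr (Or.inl ⟨by simp [single_app], by simp [single_app, Ne.symm hij]⟩)
  · by_cases hjk : j = k
    · subst hjk
      exact Or.inr (Or.inr ⟨by simp [single_app, hik], by simp [single_app]⟩)
    · exact Or.inl ⟨by simp [single_app, hik], by simp [single_app, hjk]⟩

lemma crossA {d : ℕ} (i : Fin d) (ε : ℤ) (hε : ε = 1 ∨ ε = -1) (m : ℤ)
    (x y : Site d) (hx : m ≤ ε * x i) (hy : ε * y i ≤ m - 1)
    (hk : ∃ k : Fin d, y = x + Pi.single k 1 ∨ y = x - Pi.single k 1) :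
    y i + y i = ε * (2 * m - 2) := by
  obtain ⟨k, hk | hk⟩ := hk
  · subst hk
    have hd := stepA_plus i k x
    rcases hε with h | h <;> subst h <;> rcases hd with h | h <;> omega
  · subst hk
    have hd := stepA_minus i k x
    rcases hε with h | h <;> subst h <;> rcases hd with h | h <;> omega

lemma crossBC {d : ℕ} (i j : Fin d) (hij : i ≠ j) (ε : ℤ) (hε : ε = 1 ∨ ε = -1) (m : ℤ)
    (σ : ℤ) (hσ : σ = 1 ∨ σ = -1)
    (x y : Site d) (hx : m ≤ ε * (x i + σ * x j)) (hy : ε * (y i + σ * y j) ≤ m - 1)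
    (hk : ∃ k : Fin d, y = x + Pi.single k 1 ∨ y = x - Pi.single k 1) :
    y i + σ * y j = ε * (m - 1) := by
  obtain ⟨k, hk | hk⟩ := hk
  · subst hk
    have hd := stepBC_plus i j k hij x
    rcases hε with h | h <;> subst h <;> rcases hσ with h | h <;> subst h <;>
      rcases hd with ⟨h1, h2⟩ | ⟨h1, h2⟩ | ⟨h1, h2⟩ <;> omega
  · subst hk
    have hd := stepBC_minus i j k hij x
    rcases hε with h | h <;> subst h <;> rcases hσ with h | h <;> subst h <;>
      rcases hd with ⟨h1, h2⟩ | ⟨h1, h2⟩ | ⟨h1, h2⟩ <;> omega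

lemma monoA {d n : ℕ} (u : Site d → ℕ) (hu : InASMClass d n u)
    (hleast : ∀ w : Site d → ℕ, InASMClass d n w → ∀ x, u x ≤ w x)
    (i : Fin d) (ε : ℤ) (hε : ε = 1 ∨ ε = -1) (m : ℤ) (hm : 1 ≤ m) :
    ∀ x : Site d, m ≤ ε * x i → u x ≤ u (RA i (ε * (2 * m - 2)) x) := by
  refine reflect_key u hu hleast (RA i (ε * (2 * m - 2))) (fun x => ε * x i) m
    (RA_invol i _) (lapA i _) ?_ ?_ ?_
  · intro x hx
    replace hx : m ≤ ε * x i := hx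
    show ε * RA i (ε * (2 * m - 2)) x i ≤ m - 1
    rw [RA_apply, if_pos rfl]
    rcases hε with h | h <;> subst h <;> omega
  · intro x y hx hy hk
    replace hx : m ≤ ε * x i := hx
    replace hy : ε * y i ≤ m - 1 := hy
    exact Or.inl (RA_fix i _ y (crossA i ε hε m x y hx hy hk))
  · show ε * (0 : Site d) i ≤ m - 1
    simp only [Pi.zero_apply, mul_zero]
    omega

lemma monoB {d n : ℕ} (u : Site d → ℕ) (hu : InASMClass d n u)
    (hleast : ∀ w : Site d → ℕ, InASMClass d n w → ∀ x, u x ≤ w x)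
    (i j : Fin d) (hij : i ≠ j) (ε : ℤ) (hε : ε = 1 ∨ ε = -1) (m : ℤ) (hm : 1 ≤ m) :
    ∀ x : Site d, m ≤ ε * (x i + -1 * x j) → u x ≤ u (RB i j (ε * (m - 1)) x) := by
  refine reflect_key u hu hleast (RB i j (ε * (m - 1))) (fun x => ε * (x i + -1 * x j)) m
    (RB_invol i j hij _) (lapB i j _) ?_ ?_ ?_
  · intro x hx
    replace hx : m ≤ ε * (x i + -1 * x j) := hx
    show ε * (RB i j (ε * (m - 1)) x i + -1 * RB i j (ε * (m - 1)) x j) ≤ m - 1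
    have e1 : RB i j (ε * (m - 1)) x i = x j + ε * (m - 1) := by simp [RB]
    have e2 : RB i j (ε * (m - 1)) x j = x i - ε * (m - 1) := by
      simp [RB, Ne.symm hij]
    rw [e1, e2]
    rcases hε with h | h <;> subst h <;> omega
  · intro x y hx hy hk
    replace hx : m ≤ ε * (x i + -1 * x j) := hx
    replace hy : ε * (y i + -1 * y j) ≤ m - 1 := hy
    have := crossBC i j hij ε hε m (-1) (Or.inr rfl) x y hx hy hk
    exact Or.inl (RB_fix i j hij _ y (by linarith [this]))
  · show ε * ((0 : Site d) i + -1 * (0 : Site d) j) ≤ m - 1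
    simp only [Pi.zero_apply, mul_zero, mul_neg, neg_zero, add_zero]
    omega

lemma monoC {d n : ℕ} (u : Site d → ℕ) (hu : InASMClass d n u)
    (hleast : ∀ w : Site d → ℕ, InASMClass d n w → ∀ x, u x ≤ w x)
    (i j : Fin d) (hij : i ≠ j) (ε : ℤ) (hε : ε = 1 ∨ ε = -1) (m : ℤ) (hm : 1 ≤ m) :
    ∀ x : Site d, m ≤ ε * (x i + 1 * x j) → u x ≤ u (RC i j (ε * (m - 1)) x) := by
  refine reflect_key u hu hleast (RC i j (ε * (m - 1))) (fun x => ε * (x i + 1 * x j)) m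
    (RC_invol i j hij _) (lapC i j _) ?_ ?_ ?_
  · intro x hx
    replace hx : m ≤ ε * (x i + 1 * x j) := hx
    show ε * (RC i j (ε * (m - 1)) x i + 1 * RC i j (ε * (m - 1)) x j) ≤ m - 1
    have e1 : RC i j (ε * (m - 1)) x i = ε * (m - 1) - x j := by simp [RC]
    have e2 : RC i j (ε * (m - 1)) x j = ε * (m - 1) - x i := by
      simp [RC, Ne.symm hij]
    rw [e1, e2]
    rcases hε with h | h <;> subst h <;> omega
  · intro x y hx hy hk
    replace hx : m ≤ ε * (x i + 1 * x j) := hx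
    replace hy : ε * (y i + 1 * y j) ≤ m - 1 := hy
    have := crossBC i j hij ε hε m 1 (Or.inl rfl) x y hx hy hk
    exact Or.inl (RC_fix i j hij _ y (by linarith [this]))
  · show ε * ((0 : Site d) i + 1 * (0 : Site d) j) ≤ m - 1
    simp only [Pi.zero_apply, mul_zero, one_mul, add_zero]
    omega

end Aux
section Analysis

lemma lam_tendsto {d : ℕ} (hd : 1 ≤ d) :
    Filter.Tendsto (fun n : ℕ => (n : ℝ) ^ (-(1 : ℝ) / d)) atTop (nhds 0) := by
  have hd0 : (0:ℝ) < 1 / d := by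
    have : (0:ℝ) < d := by exact_mod_cast hd
    positivity
  have := (tendsto_rpow_neg_atTop hd0).comp (tendsto_natCast_atTop_atTop (R := ℝ))
  simpa [Function.comp_def, neg_div] using this

lemma lam_pos {d : ℕ} {n : ℕ} (hn : 1 ≤ n) : (0:ℝ) < (n : ℝ) ^ (-(1 : ℝ) / d) :=
  Real.rpow_pos_of_pos (by exact_mod_cast hn) _

lemma tendsto_of_abs_le {f g : ℕ → ℝ} {c : ℝ} (hg : Filter.Tendsto g atTop (nhds 0))
    (h : ∀ᶠ n in atTop, |f n - c| ≤ g n) : Filter.Tendsto f atTop (nhds c) := by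
  have h0 : Filter.Tendsto (fun n => f n - c) atTop (nhds 0) :=
    squeeze_zero_norm' (by simpa [Real.norm_eq_abs] using h) hg
  simpa using h0.add_const c

lemma floor_tendsto {d : ℕ} (hd : 1 ≤ d) (c : ℝ) :
    Filter.Tendsto
      (fun n : ℕ => (n : ℝ) ^ (-(1 : ℝ) / d) * ((⌊c / ((n : ℝ) ^ (-(1 : ℝ) / d))⌋ : ℤ) : ℝ))
      atTop (nhds c) := by
  apply tendsto_of_abs_le (lam_tendsto hd)
  filter_upwards [eventually_ge_atTop 1] with n hn
  have hL : (0:ℝ) < (n : ℝ) ^ (-(1 : ℝ) / d) := lam_pos hn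
  set L := (n : ℝ) ^ (-(1 : ℝ) / d)
  have h1 : ((⌊c / L⌋ : ℤ) : ℝ) ≤ c / L := Int.floor_le _
  have h2 : c / L - 1 < ((⌊c / L⌋ : ℤ) : ℝ) := Int.sub_one_lt_floor _
  have e : L * (c / L) = c := by field_simp
  rw [abs_le]
  constructor
  · nlinarith [mul_lt_mul_of_pos_left h2 hL]
  · nlinarith [mul_le_mul_of_nonneg_left h1 hL.le]

lemma ceil_tendsto {d : ℕ} (hd : 1 ≤ d) (c : ℝ) (hc : 0 ≤ c) :
    Filter.Tendsto
      (fun n : ℕ => (n : ℝ) ^ (-(1 : ℝ) / d) *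
        ((max 1 ⌈c / ((n : ℝ) ^ (-(1 : ℝ) / d))⌉ : ℤ) : ℝ))
      atTop (nhds c) := by
  apply tendsto_of_abs_le (lam_tendsto hd)
  filter_upwards [eventually_ge_atTop 1] with n hn
  have hL : (0:ℝ) < (n : ℝ) ^ (-(1 : ℝ) / d) := lam_pos hn
  set L := (n : ℝ) ^ (-(1 : ℝ) / d)
  set M : ℤ := max 1 ⌈c / L⌉ with hM
  have hz : 0 ≤ c / L := div_nonneg hc hL.le
  have h1 : c / L ≤ (M : ℝ) := by
    have := Int.le_ceil (c / L)
    have h2 : (⌈c / L⌉ : ℝ) ≤ (M : ℝ) := by exact_mod_cast le_max_right 1 ⌈c / L⌉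
    linarith
  have h2 : (M : ℝ) ≤ c / L + 1 := by
    have hceil : (⌈c / L⌉ : ℝ) < c / L + 1 := Int.ceil_lt_add_one _
    have hone : (1:ℝ) ≤ c / L + 1 := by linarith
    have : (M:ℝ) = max (1:ℝ) ((⌈c / L⌉ : ℤ) : ℝ) := by push_cast [hM]; rfl
    rw [this]
    exact max_le hone hceil.le
  have e : L * (c / L) = c := by field_simp
  rw [abs_le]
  constructor
  · nlinarith [mul_le_mul_of_nonneg_left h1 hL.le]
  · nlinarith [mul_le_mul_of_nonneg_left h2 hL.le]

lemma limit_arg {d : ℕ} (u : ℕ → Site d → ℕ)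
    (u₀ : (Fin d → ℝ) → ℝ)
    (hcont : ContinuousOn u₀ {x | x ≠ 0})
    (hconv : ∀ K : Set (Fin d → ℝ), IsCompact K → K ⊆ {x | x ≠ 0} →
      ∀ ε : ℝ, 0 < ε → ∃ N : ℕ, ∀ n : ℕ, N ≤ n → ∀ ξ : Site d,
        (fun i => (n : ℝ) ^ (-(1 : ℝ) / d) * (ξ i : ℝ)) ∈ K →
        |(n : ℝ) ^ (-(2 : ℝ) / d) * (u n ξ : ℝ) -
            u₀ (fun i => (n : ℝ) ^ (-(1 : ℝ) / d) * (ξ i : ℝ))| ≤ ε)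
    (x1 x2 : Fin d → ℝ) (hx1 : x1 ≠ 0) (hx2 : x2 ≠ 0)
    (ξ ξ' : ℕ → Site d)
    (hT2 : Filter.Tendsto (fun n : ℕ => (fun i => (n : ℝ) ^ (-(1 : ℝ) / d) * (ξ n i : ℝ)))
      atTop (nhds x2))
    (hT1 : Filter.Tendsto (fun n : ℕ => (fun i => (n : ℝ) ^ (-(1 : ℝ) / d) * (ξ' n i : ℝ)))
      atTop (nhds x1))
    (hmono : ∀ᶠ n in atTop, u n (ξ n) ≤ u n (ξ' n)) :
    u₀ x2 ≤ u₀ x1 := by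
  have hnx1 : 0 < ‖x1‖ := norm_pos_iff.2 hx1
  have hnx2 : 0 < ‖x2‖ := norm_pos_iff.2 hx2
  set K : Set (Fin d → ℝ) :=
    Metric.closedBall x1 (‖x1‖ / 2) ∪ Metric.closedBall x2 (‖x2‖ / 2) with hK
  have hKc : IsCompact K := (isCompact_closedBall _ _).union (isCompact_closedBall _ _)
  have hKne : K ⊆ {x | x ≠ 0} := by
    rintro y (hy | hy) <;>
    · simp only [Metric.mem_closedBall] at hy
      intro h0
      subst h0
      rw [dist_zero_left] at hy
      first
        | linarith
  have hg2 : Filter.Tendsto (fun n : ℕ =>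
      u₀ (fun i => (n : ℝ) ^ (-(1 : ℝ) / d) * (ξ n i : ℝ))) atTop (nhds (u₀ x2)) :=
    ((hcont.continuousAt (isOpen_ne.mem_nhds hx2)).tendsto).comp hT2
  have hg1 : Filter.Tendsto (fun n : ℕ =>
      u₀ (fun i => (n : ℝ) ^ (-(1 : ℝ) / d) * (ξ' n i : ℝ))) atTop (nhds (u₀ x1)) :=
    ((hcont.continuousAt (isOpen_ne.mem_nhds hx1)).tendsto).comp hT1
  have hmem2 : ∀ᶠ n : ℕ in atTop, (fun i => (n : ℝ) ^ (-(1 : ℝ) / d) * (ξ n i : ℝ)) ∈ K :=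
    hT2 (Filter.mem_of_superset (Metric.closedBall_mem_nhds x2 (by positivity))
      Set.subset_union_right)
  have hmem1 : ∀ᶠ n : ℕ in atTop, (fun i => (n : ℝ) ^ (-(1 : ℝ) / d) * (ξ' n i : ℝ)) ∈ K :=
    hT1 (Filter.mem_of_superset (Metric.closedBall_mem_nhds x1 (by positivity))
      Set.subset_union_left)
  have key : ∀ (ζ : ℕ → Site d) (x : Fin d → ℝ),
      (∀ᶠ n : ℕ in atTop, (fun i => (n : ℝ) ^ (-(1 : ℝ) / d) * (ζ n i : ℝ)) ∈ K) →
      Filter.Tendsto (fun n : ℕ =>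
        u₀ (fun i => (n : ℝ) ^ (-(1 : ℝ) / d) * (ζ n i : ℝ))) atTop (nhds (u₀ x)) →
      Filter.Tendsto (fun n : ℕ => (n : ℝ) ^ (-(2 : ℝ) / d) * (u n (ζ n) : ℝ))
        atTop (nhds (u₀ x)) := by
    intro ζ x hmem hg
    have h0 : Filter.Tendsto (fun n : ℕ => (n : ℝ) ^ (-(2 : ℝ) / d) * (u n (ζ n) : ℝ) -
        u₀ (fun i => (n : ℝ) ^ (-(1 : ℝ) / d) * (ζ n i : ℝ))) atTop (nhds 0) := by
      rw [Metric.tendsto_atTop]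
      intro ε hε
      obtain ⟨N1, hN1⟩ := hconv K hKc hKne (ε / 2) (by positivity)
      obtain ⟨N2, hN2⟩ := Filter.eventually_atTop.1 hmem
      refine ⟨max N1 N2, fun n hn => ?_⟩
      have h1 := hN1 n (le_trans (le_max_left _ _) hn) (ζ n)
        (hN2 n (le_trans (le_max_right _ _) hn))
      rw [Real.dist_eq, sub_zero]
      calc |_| ≤ ε / 2 := h1
        _ < ε := by linarith
    have := h0.add hg
    simpa using this
  have hA := key ξ x2 hmem2 hg2
  have hB := key ξ' x1 hmem1 hg1
  refine le_of_tendsto_of_tendsto hA hB ?_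
  filter_upwards [hmono] with n hn
  exact mul_le_mul_of_nonneg_left (by exact_mod_cast hn)
    (Real.rpow_nonneg (Nat.cast_nonneg n) _)

end Analysis

section Cases

lemma caseA {d : ℕ} (hd : 2 ≤ d)
    (u : ℕ → Site d → ℕ)
    (hu : ∀ n, InASMClass d n (u n))
    (hleast : ∀ n, ∀ w : Site d → ℕ, InASMClass d n w → ∀ x, u n x ≤ w x)
    (u₀ : (Fin d → ℝ) → ℝ)
    (hcont : ContinuousOn u₀ {x | x ≠ 0})
    (hconv : ∀ K : Set (Fin d → ℝ), IsCompact K → K ⊆ {x | x ≠ 0} →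
      ∀ ε : ℝ, 0 < ε → ∃ N : ℕ, ∀ n : ℕ, N ≤ n → ∀ ξ : Site d,
        (fun i => (n : ℝ) ^ (-(1 : ℝ) / d) * (ξ i : ℝ)) ∈ K →
        |(n : ℝ) ^ (-(2 : ℝ) / d) * (u n ξ : ℝ) -
            u₀ (fun i => (n : ℝ) ^ (-(1 : ℝ) / d) * (ξ i : ℝ))| ≤ ε)
    (i : Fin d) (x1 x2 : Fin d → ℝ) (hx1 : x1 ≠ 0) (hx2 : x2 ≠ 0)
    (t : ℝ) (ht : t ≠ 0)
    (hci : x1 i = x2 i + t) (hcne : ∀ l, l ≠ i → x1 l = x2 l)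
    (hts : t * (x1 i + x2 i) ≤ 0) :
    u₀ x2 ≤ u₀ x1 := by
  have hd1 : 1 ≤ d := by omega
  obtain ⟨ε, hε, hc0, hγ⟩ :
      ∃ ε : ℤ, (ε = 1 ∨ ε = -1) ∧ 0 ≤ (ε : ℝ) * ((x1 i + x2 i) / 2) ∧
        0 < (ε : ℝ) * x2 i - (ε : ℝ) * ((x1 i + x2 i) / 2) := by
    rcases lt_or_gt_of_ne ht with htneg | htpos
    · exact ⟨1, Or.inl rfl, by push_cast; nlinarith, by push_cast; nlinarith⟩
    · exact ⟨-1, Or.inr rfl, by push_cast; nlinarith, by push_cast; nlinarith⟩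
  set c0 : ℝ := (ε : ℝ) * ((x1 i + x2 i) / 2) with hc0def
  have hmlim := ceil_tendsto hd1 c0 hc0
  have hflim : ∀ l, Filter.Tendsto
      (fun n : ℕ => (n : ℝ) ^ (-(1 : ℝ) / d) *
        ((⌊x2 l / ((n : ℝ) ^ (-(1 : ℝ) / d))⌋ : ℤ) : ℝ)) atTop (nhds (x2 l)) :=
    fun l => floor_tendsto hd1 (x2 l)
  refine limit_arg u u₀ hcont hconv x1 x2 hx1 hx2
    (fun n l => ⌊x2 l / ((n : ℝ) ^ (-(1 : ℝ) / d))⌋)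
    (fun n => RA i (ε * (2 * max 1 ⌈c0 / ((n : ℝ) ^ (-(1 : ℝ) / d))⌉ - 2))
      (fun l => ⌊x2 l / ((n : ℝ) ^ (-(1 : ℝ) / d))⌋)) ?_ ?_ ?_
  · -- hT2
    rw [tendsto_pi_nhds]
    intro l
    exact hflim l
  · -- hT1
    rw [tendsto_pi_nhds]
    intro l
    by_cases hl : l = i
    · rw [hl]
      have heq : (fun n : ℕ => (n : ℝ) ^ (-(1 : ℝ) / d) *
          ((RA i (ε * (2 * max 1 ⌈c0 / ((n : ℝ) ^ (-(1 : ℝ) / d))⌉ - 2))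
            (fun l => ⌊x2 l / ((n : ℝ) ^ (-(1 : ℝ) / d))⌋) i : ℤ) : ℝ)) =
          fun n : ℕ => (ε : ℝ) * 2 * ((n : ℝ) ^ (-(1 : ℝ) / d) *
              ((max 1 ⌈c0 / ((n : ℝ) ^ (-(1 : ℝ) / d))⌉ : ℤ) : ℝ)) -
            2 * (ε : ℝ) * ((n : ℝ) ^ (-(1 : ℝ) / d)) -
            (n : ℝ) ^ (-(1 : ℝ) / d) *
              ((⌊x2 i / ((n : ℝ) ^ (-(1 : ℝ) / d))⌋ : ℤ) : ℝ) := by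
        funext n
        rw [RA_apply, if_pos rfl]
        push_cast
        ring
      rw [heq]
      have hlim := ((hmlim.const_mul ((ε : ℝ) * 2)).sub
        ((lam_tendsto hd1).const_mul (2 * (ε : ℝ)))).sub (hflim i)
      have hval : (ε : ℝ) * 2 * c0 - 2 * (ε : ℝ) * 0 - x2 i = x1 i := by
        rw [hc0def]
        rcases hε with h | h <;> subst h <;> push_cast <;> ring_nf <;> linarith [hci]
      rw [← hval]
      exact hlim
    · simp only [RA_apply, if_neg hl]
      rw [show x1 l = x2 l from hcne l hl]
      exact hflim l
  · -- hmono
    have hgap : Filter.Tendsto (fun n : ℕ =>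
        (ε : ℝ) * ((n : ℝ) ^ (-(1 : ℝ) / d) *
          ((⌊x2 i / ((n : ℝ) ^ (-(1 : ℝ) / d))⌋ : ℤ) : ℝ)) -
        (n : ℝ) ^ (-(1 : ℝ) / d) *
          ((max 1 ⌈c0 / ((n : ℝ) ^ (-(1 : ℝ) / d))⌉ : ℤ) : ℝ))
        atTop (nhds ((ε : ℝ) * x2 i - c0)) :=
      ((hflim i).const_mul _).sub hmlim
    have hev := hgap (Ioi_mem_nhds hγ)
    filter_upwards [hev, eventually_ge_atTop 1] with n hp h1
    have hL : (0:ℝ) < (n : ℝ) ^ (-(1 : ℝ) / d) := lam_pos h1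
    replace hp : (0:ℝ) <
        (ε : ℝ) * ((n : ℝ) ^ (-(1 : ℝ) / d) *
          ((⌊x2 i / ((n : ℝ) ^ (-(1 : ℝ) / d))⌋ : ℤ) : ℝ)) -
        (n : ℝ) ^ (-(1 : ℝ) / d) *
          ((max 1 ⌈c0 / ((n : ℝ) ^ (-(1 : ℝ) / d))⌉ : ℤ) : ℝ) := hp
    have hint : max 1 ⌈c0 / ((n : ℝ) ^ (-(1 : ℝ) / d))⌉ ≤
        ε * ⌊x2 i / ((n : ℝ) ^ (-(1 : ℝ) / d))⌋ := by
      have hr : ((max 1 ⌈c0 / ((n : ℝ) ^ (-(1 : ℝ) / d))⌉ : ℤ) : ℝ) <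
          ((ε * ⌊x2 i / ((n : ℝ) ^ (-(1 : ℝ) / d))⌋ : ℤ) : ℝ) := by
        by_contra hcon
        push_neg at hcon
        rw [Int.cast_mul] at hcon
        nlinarith [mul_le_mul_of_nonneg_left hcon hL.le]
      have := hr.le
      exact_mod_cast this
    exact monoA (u n) (hu n) (hleast n) i ε hε _ (le_max_left _ _) _ hint

end Cases

section CasesBC

lemma caseB {d : ℕ} (hd : 2 ≤ d)
    (u : ℕ → Site d → ℕ)
    (hu : ∀ n, InASMClass d n (u n))
    (hleast : ∀ n, ∀ w : Site d → ℕ, InASMClass d n w → ∀ x, u n x ≤ w x)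
    (u₀ : (Fin d → ℝ) → ℝ)
    (hcont : ContinuousOn u₀ {x | x ≠ 0})
    (hconv : ∀ K : Set (Fin d → ℝ), IsCompact K → K ⊆ {x | x ≠ 0} →
      ∀ ε : ℝ, 0 < ε → ∃ N : ℕ, ∀ n : ℕ, N ≤ n → ∀ ξ : Site d,
        (fun i => (n : ℝ) ^ (-(1 : ℝ) / d) * (ξ i : ℝ)) ∈ K →
        |(n : ℝ) ^ (-(2 : ℝ) / d) * (u n ξ : ℝ) -
            u₀ (fun i => (n : ℝ) ^ (-(1 : ℝ) / d) * (ξ i : ℝ))| ≤ ε)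
    (i j : Fin d) (hij : i ≠ j) (x1 x2 : Fin d → ℝ) (hx1 : x1 ≠ 0) (hx2 : x2 ≠ 0)
    (t : ℝ) (ht : t ≠ 0)
    (hci : x1 i = x2 i + t) (hcj : x1 j = x2 j - t)
    (hcne : ∀ l, l ≠ i → l ≠ j → x1 l = x2 l)
    (hts : t * (x1 i + x2 i - x1 j - x2 j) ≤ 0) :
    u₀ x2 ≤ u₀ x1 := by
  have hd1 : 1 ≤ d := by omega
  obtain ⟨ε, hε, hc0, hγ⟩ :
      ∃ ε : ℤ, (ε = 1 ∨ ε = -1) ∧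
        0 ≤ (ε : ℝ) * ((x1 i + x2 i - x1 j - x2 j) / 2) ∧
        0 < (ε : ℝ) * (x2 i + (-1 : ℝ) * x2 j) -
          (ε : ℝ) * ((x1 i + x2 i - x1 j - x2 j) / 2) := by
    rcases lt_or_gt_of_ne ht with htneg | htpos
    · exact ⟨1, Or.inl rfl, by push_cast; nlinarith, by push_cast; nlinarith⟩
    · exact ⟨-1, Or.inr rfl, by push_cast; nlinarith, by push_cast; nlinarith⟩
  set c0 : ℝ := (ε : ℝ) * ((x1 i + x2 i - x1 j - x2 j) / 2) with hc0def
  have hmlim := ceil_tendsto hd1 c0 hc0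
  have hflim : ∀ l, Filter.Tendsto
      (fun n : ℕ => (n : ℝ) ^ (-(1 : ℝ) / d) *
        ((⌊x2 l / ((n : ℝ) ^ (-(1 : ℝ) / d))⌋ : ℤ) : ℝ)) atTop (nhds (x2 l)) :=
    fun l => floor_tendsto hd1 (x2 l)
  refine limit_arg u u₀ hcont hconv x1 x2 hx1 hx2
    (fun n l => ⌊x2 l / ((n : ℝ) ^ (-(1 : ℝ) / d))⌋)
    (fun n => RB i j (ε * (max 1 ⌈c0 / ((n : ℝ) ^ (-(1 : ℝ) / d))⌉ - 1))
      (fun l => ⌊x2 l / ((n : ℝ) ^ (-(1 : ℝ) / d))⌋)) ?_ ?_ ?_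
  · rw [tendsto_pi_nhds]
    intro l
    exact hflim l
  · rw [tendsto_pi_nhds]
    intro l
    by_cases hli : l = i
    · rw [hli]
      have heq : (fun n : ℕ => (n : ℝ) ^ (-(1 : ℝ) / d) *
          ((RB i j (ε * (max 1 ⌈c0 / ((n : ℝ) ^ (-(1 : ℝ) / d))⌉ - 1))
            (fun l => ⌊x2 l / ((n : ℝ) ^ (-(1 : ℝ) / d))⌋) i : ℤ) : ℝ)) =
          fun n : ℕ => (n : ℝ) ^ (-(1 : ℝ) / d) * ((⌊x2 j / ((n : ℝ) ^ (-(1 : ℝ) / d))⌋ : ℤ) : ℝ) + (ε : ℝ) * ((n : ℝ) ^ (-(1 : ℝ) / d) * ((max 1 ⌈c0 / ((n : ℝ) ^ (-(1 : ℝ) / d))⌉ : ℤ) : ℝ)) - (ε : ℝ) * ((n : ℝ) ^ (-(1 : ℝ) / d)) := by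
        funext n
        simp only [RB, if_true]
        push_cast
        ring
      rw [heq]
      have hlim := ((hflim j).add (hmlim.const_mul ((ε : ℝ)))).sub ((lam_tendsto hd1).const_mul ((ε : ℝ)))
      have hval : x2 j + (ε : ℝ) * c0 - (ε : ℝ) * 0 = x1 i := by
        rw [hc0def]
        rcases hε with h | h <;> subst h <;> push_cast <;> linarith [hci, hcj]
      rw [← hval]
      exact hlim
    · by_cases hlj : l = j
      · rw [hlj]
        have heq : (fun n : ℕ => (n : ℝ) ^ (-(1 : ℝ) / d) *
            ((RB i j (ε * (max 1 ⌈c0 / ((n : ℝ) ^ (-(1 : ℝ) / d))⌉ - 1))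
              (fun l => ⌊x2 l / ((n : ℝ) ^ (-(1 : ℝ) / d))⌋) j : ℤ) : ℝ)) =
            fun n : ℕ => (n : ℝ) ^ (-(1 : ℝ) / d) * ((⌊x2 i / ((n : ℝ) ^ (-(1 : ℝ) / d))⌋ : ℤ) : ℝ) - (ε : ℝ) * ((n : ℝ) ^ (-(1 : ℝ) / d) * ((max 1 ⌈c0 / ((n : ℝ) ^ (-(1 : ℝ) / d))⌉ : ℤ) : ℝ)) + (ε : ℝ) * ((n : ℝ) ^ (-(1 : ℝ) / d)) := by
          funext n
          simp only [RB, if_neg (Ne.symm hij), if_true]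
          push_cast
          ring
        rw [heq]
        have hlim := ((hflim i).sub (hmlim.const_mul ((ε : ℝ)))).add ((lam_tendsto hd1).const_mul ((ε : ℝ)))
        have hval : x2 i - (ε : ℝ) * c0 + (ε : ℝ) * 0 = x1 j := by
          rw [hc0def]
          rcases hε with h | h <;> subst h <;> push_cast <;> linarith [hci, hcj]
        rw [← hval]
        exact hlim
      · simp only [RB, if_neg hli, if_neg hlj]
        rw [show x1 l = x2 l from hcne l hli hlj]
        exact hflim l
  · have hgap : Filter.Tendsto (fun n : ℕ =>
        (ε : ℝ) * ((n : ℝ) ^ (-(1 : ℝ) / d) *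
            ((⌊x2 i / ((n : ℝ) ^ (-(1 : ℝ) / d))⌋ : ℤ) : ℝ) +
          (-1 : ℝ) * ((n : ℝ) ^ (-(1 : ℝ) / d) *
            ((⌊x2 j / ((n : ℝ) ^ (-(1 : ℝ) / d))⌋ : ℤ) : ℝ))) -
        (n : ℝ) ^ (-(1 : ℝ) / d) *
          ((max 1 ⌈c0 / ((n : ℝ) ^ (-(1 : ℝ) / d))⌉ : ℤ) : ℝ))
        atTop (nhds ((ε : ℝ) * (x2 i + (-1 : ℝ) * x2 j) - c0)) :=
      (((hflim i).add ((hflim j).const_mul (-1 : ℝ))).const_mul ((ε : ℝ))).sub hmlim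
    have hev := hgap (Ioi_mem_nhds hγ)
    filter_upwards [hev, eventually_ge_atTop 1] with n hp h1
    have hL : (0:ℝ) < (n : ℝ) ^ (-(1 : ℝ) / d) := lam_pos h1
    replace hp : (0:ℝ) <
        (ε : ℝ) * ((n : ℝ) ^ (-(1 : ℝ) / d) *
            ((⌊x2 i / ((n : ℝ) ^ (-(1 : ℝ) / d))⌋ : ℤ) : ℝ) +
          (-1 : ℝ) * ((n : ℝ) ^ (-(1 : ℝ) / d) *
            ((⌊x2 j / ((n : ℝ) ^ (-(1 : ℝ) / d))⌋ : ℤ) : ℝ))) -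
        (n : ℝ) ^ (-(1 : ℝ) / d) *
          ((max 1 ⌈c0 / ((n : ℝ) ^ (-(1 : ℝ) / d))⌉ : ℤ) : ℝ) := hp
    have hint : max 1 ⌈c0 / ((n : ℝ) ^ (-(1 : ℝ) / d))⌉ ≤
        ε * (⌊x2 i / ((n : ℝ) ^ (-(1 : ℝ) / d))⌋ +
          -1 * ⌊x2 j / ((n : ℝ) ^ (-(1 : ℝ) / d))⌋) := by
      have hr : ((max 1 ⌈c0 / ((n : ℝ) ^ (-(1 : ℝ) / d))⌉ : ℤ) : ℝ) <
          (ε : ℝ) * (((⌊x2 i / ((n : ℝ) ^ (-(1 : ℝ) / d))⌋ : ℤ) : ℝ) +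
            (-1 : ℝ) * ((⌊x2 j / ((n : ℝ) ^ (-(1 : ℝ) / d))⌋ : ℤ) : ℝ)) := by
        by_contra hcon
        push_neg at hcon
        nlinarith [mul_le_mul_of_nonneg_left hcon hL.le]
      exact_mod_cast hr.le
    exact monoB (u n) (hu n) (hleast n) i j hij ε hε _ (le_max_left _ _) _ hint

lemma caseC {d : ℕ} (hd : 2 ≤ d)
    (u : ℕ → Site d → ℕ)
    (hu : ∀ n, InASMClass d n (u n))
    (hleast : ∀ n, ∀ w : Site d → ℕ, InASMClass d n w → ∀ x, u n x ≤ w x)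
    (u₀ : (Fin d → ℝ) → ℝ)
    (hcont : ContinuousOn u₀ {x | x ≠ 0})
    (hconv : ∀ K : Set (Fin d → ℝ), IsCompact K → K ⊆ {x | x ≠ 0} →
      ∀ ε : ℝ, 0 < ε → ∃ N : ℕ, ∀ n : ℕ, N ≤ n → ∀ ξ : Site d,
        (fun i => (n : ℝ) ^ (-(1 : ℝ) / d) * (ξ i : ℝ)) ∈ K →
        |(n : ℝ) ^ (-(2 : ℝ) / d) * (u n ξ : ℝ) -
            u₀ (fun i => (n : ℝ) ^ (-(1 : ℝ) / d) * (ξ i : ℝ))| ≤ ε)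
    (i j : Fin d) (hij : i ≠ j) (x1 x2 : Fin d → ℝ) (hx1 : x1 ≠ 0) (hx2 : x2 ≠ 0)
    (t : ℝ) (ht : t ≠ 0)
    (hci : x1 i = x2 i + t) (hcj : x1 j = x2 j + t)
    (hcne : ∀ l, l ≠ i → l ≠ j → x1 l = x2 l)
    (hts : t * (x1 i + x2 i + x1 j + x2 j) ≤ 0) :
    u₀ x2 ≤ u₀ x1 := by
  have hd1 : 1 ≤ d := by omega
  obtain ⟨ε, hε, hc0, hγ⟩ :
      ∃ ε : ℤ, (ε = 1 ∨ ε = -1) ∧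
        0 ≤ (ε : ℝ) * ((x1 i + x2 i + x1 j + x2 j) / 2) ∧
        0 < (ε : ℝ) * (x2 i + (1 : ℝ) * x2 j) -
          (ε : ℝ) * ((x1 i + x2 i + x1 j + x2 j) / 2) := by
    rcases lt_or_gt_of_ne ht with htneg | htpos
    · exact ⟨1, Or.inl rfl, by push_cast; nlinarith, by push_cast; nlinarith⟩
    · exact ⟨-1, Or.inr rfl, by push_cast; nlinarith, by push_cast; nlinarith⟩
  set c0 : ℝ := (ε : ℝ) * ((x1 i + x2 i + x1 j + x2 j) / 2) with hc0def
  have hmlim := ceil_tendsto hd1 c0 hc0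
  have hflim : ∀ l, Filter.Tendsto
      (fun n : ℕ => (n : ℝ) ^ (-(1 : ℝ) / d) *
        ((⌊x2 l / ((n : ℝ) ^ (-(1 : ℝ) / d))⌋ : ℤ) : ℝ)) atTop (nhds (x2 l)) :=
    fun l => floor_tendsto hd1 (x2 l)
  refine limit_arg u u₀ hcont hconv x1 x2 hx1 hx2
    (fun n l => ⌊x2 l / ((n : ℝ) ^ (-(1 : ℝ) / d))⌋)
    (fun n => RC i j (ε * (max 1 ⌈c0 / ((n : ℝ) ^ (-(1 : ℝ) / d))⌉ - 1))
      (fun l => ⌊x2 l / ((n : ℝ) ^ (-(1 : ℝ) / d))⌋)) ?_ ?_ ?_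
  · rw [tendsto_pi_nhds]
    intro l
    exact hflim l
  · rw [tendsto_pi_nhds]
    intro l
    by_cases hli : l = i
    · rw [hli]
      have heq : (fun n : ℕ => (n : ℝ) ^ (-(1 : ℝ) / d) *
          ((RC i j (ε * (max 1 ⌈c0 / ((n : ℝ) ^ (-(1 : ℝ) / d))⌉ - 1))
            (fun l => ⌊x2 l / ((n : ℝ) ^ (-(1 : ℝ) / d))⌋) i : ℤ) : ℝ)) =
          fun n : ℕ => (ε : ℝ) * ((n : ℝ) ^ (-(1 : ℝ) / d) * ((max 1 ⌈c0 / ((n : ℝ) ^ (-(1 : ℝ) / d))⌉ : ℤ) : ℝ)) - (ε : ℝ) * ((n : ℝ) ^ (-(1 : ℝ) / d)) - (n : ℝ) ^ (-(1 : ℝ) / d) * ((⌊x2 j / ((n : ℝ) ^ (-(1 : ℝ) / d))⌋ : ℤ) : ℝ) := by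
        funext n
        simp only [RC, if_true]
        push_cast
        ring
      rw [heq]
      have hlim := ((hmlim.const_mul ((ε : ℝ))).sub ((lam_tendsto hd1).const_mul ((ε : ℝ)))).sub (hflim j)
      have hval : (ε : ℝ) * c0 - (ε : ℝ) * 0 - x2 j = x1 i := by
        rw [hc0def]
        rcases hε with h | h <;> subst h <;> push_cast <;> linarith [hci, hcj]
      rw [← hval]
      exact hlim
    · by_cases hlj : l = j
      · rw [hlj]
        have heq : (fun n : ℕ => (n : ℝ) ^ (-(1 : ℝ) / d) *
            ((RC i j (ε * (max 1 ⌈c0 / ((n : ℝ) ^ (-(1 : ℝ) / d))⌉ - 1))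
              (fun l => ⌊x2 l / ((n : ℝ) ^ (-(1 : ℝ) / d))⌋) j : ℤ) : ℝ)) =
            fun n : ℕ => (ε : ℝ) * ((n : ℝ) ^ (-(1 : ℝ) / d) * ((max 1 ⌈c0 / ((n : ℝ) ^ (-(1 : ℝ) / d))⌉ : ℤ) : ℝ)) - (ε : ℝ) * ((n : ℝ) ^ (-(1 : ℝ) / d)) - (n : ℝ) ^ (-(1 : ℝ) / d) * ((⌊x2 i / ((n : ℝ) ^ (-(1 : ℝ) / d))⌋ : ℤ) : ℝ) := by
          funext n
          simp only [RC, if_neg (Ne.symm hij), if_true]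
          push_cast
          ring
        rw [heq]
        have hlim := ((hmlim.const_mul ((ε : ℝ))).sub ((lam_tendsto hd1).const_mul ((ε : ℝ)))).sub (hflim i)
        have hval : (ε : ℝ) * c0 - (ε : ℝ) * 0 - x2 i = x1 j := by
          rw [hc0def]
          rcases hε with h | h <;> subst h <;> push_cast <;> linarith [hci, hcj]
        rw [← hval]
        exact hlim
      · simp only [RC, if_neg hli, if_neg hlj]
        rw [show x1 l = x2 l from hcne l hli hlj]
        exact hflim l
  · have hgap : Filter.Tendsto (fun n : ℕ =>
        (ε : ℝ) * ((n : ℝ) ^ (-(1 : ℝ) / d) *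
            ((⌊x2 i / ((n : ℝ) ^ (-(1 : ℝ) / d))⌋ : ℤ) : ℝ) +
          (1 : ℝ) * ((n : ℝ) ^ (-(1 : ℝ) / d) *
            ((⌊x2 j / ((n : ℝ) ^ (-(1 : ℝ) / d))⌋ : ℤ) : ℝ))) -
        (n : ℝ) ^ (-(1 : ℝ) / d) *
          ((max 1 ⌈c0 / ((n : ℝ) ^ (-(1 : ℝ) / d))⌉ : ℤ) : ℝ))
        atTop (nhds ((ε : ℝ) * (x2 i + (1 : ℝ) * x2 j) - c0)) :=
      (((hflim i).add ((hflim j).const_mul (1 : ℝ))).const_mul ((ε : ℝ))).sub hmlim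
    have hev := hgap (Ioi_mem_nhds hγ)
    filter_upwards [hev, eventually_ge_atTop 1] with n hp h1
    have hL : (0:ℝ) < (n : ℝ) ^ (-(1 : ℝ) / d) := lam_pos h1
    replace hp : (0:ℝ) <
        (ε : ℝ) * ((n : ℝ) ^ (-(1 : ℝ) / d) *
            ((⌊x2 i / ((n : ℝ) ^ (-(1 : ℝ) / d))⌋ : ℤ) : ℝ) +
          (1 : ℝ) * ((n : ℝ) ^ (-(1 : ℝ) / d) *
            ((⌊x2 j / ((n : ℝ) ^ (-(1 : ℝ) / d))⌋ : ℤ) : ℝ))) -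
        (n : ℝ) ^ (-(1 : ℝ) / d) *
          ((max 1 ⌈c0 / ((n : ℝ) ^ (-(1 : ℝ) / d))⌉ : ℤ) : ℝ) := hp
    have hint : max 1 ⌈c0 / ((n : ℝ) ^ (-(1 : ℝ) / d))⌉ ≤
        ε * (⌊x2 i / ((n : ℝ) ^ (-(1 : ℝ) / d))⌋ +
          1 * ⌊x2 j / ((n : ℝ) ^ (-(1 : ℝ) / d))⌋) := by
      have hr : ((max 1 ⌈c0 / ((n : ℝ) ^ (-(1 : ℝ) / d))⌉ : ℤ) : ℝ) <
          (ε : ℝ) * (((⌊x2 i / ((n : ℝ) ^ (-(1 : ℝ) / d))⌋ : ℤ) : ℝ) +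
            (1 : ℝ) * ((⌊x2 j / ((n : ℝ) ^ (-(1 : ℝ) / d))⌋ : ℤ) : ℝ)) := by
        by_contra hcon
        push_neg at hcon
        nlinarith [mul_le_mul_of_nonneg_left hcon hL.le]
      exact_mod_cast hr.le
    exact monoC (u n) (hu n) (hleast n) i j hij ε hε _ (le_max_left _ _) _ hint

end CasesBC

/- AUX END -/

/-- Monotonicity of the Abelian sandpile scaling limit. Let `d ≥ 2`
and for each `n` let `u_n` be the Abelian sandpile odometer for `n` chips at the
origin (the least element of `W_n`). Suppose `u₀ : ℝ^d ∖ {0} → [0,∞)` is continuous and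
the rescaled odometers `ξ ↦ n^{-2/d}·u_n(ξ)` converge to `u₀` locally uniformly in
`ℝ^d ∖ {0}`. Then for every `e ∈ 𝒩` and all `x¹, x² ∈ ℝ^d ∖ {0}` such that `x¹ - x²`
is a nonzero real multiple of `e`, `|x¹| ≤ |x²|` implies `u₀(x¹) ≥ u₀(x²)`. -/
theorem stmt10 {d : ℕ} (hd : 2 ≤ d)
    (u : ℕ → Site d → ℕ)
    (hu : ∀ n, InASMClass d n (u n))
    (hleast : ∀ n, ∀ w : Site d → ℕ, InASMClass d n w → ∀ x, u n x ≤ w x)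
    (u₀ : (Fin d → ℝ) → ℝ)
    (hcont : ContinuousOn u₀ {x | x ≠ 0})
    (hnonneg : ∀ x : Fin d → ℝ, x ≠ 0 → 0 ≤ u₀ x)
    (hconv : ∀ K : Set (Fin d → ℝ), IsCompact K → K ⊆ {x | x ≠ 0} →
      ∀ ε : ℝ, 0 < ε → ∃ N : ℕ, ∀ n : ℕ, N ≤ n → ∀ ξ : Site d,
        (fun i => (n : ℝ) ^ (-(1 : ℝ) / d) * (ξ i : ℝ)) ∈ K →
        |(n : ℝ) ^ (-(2 : ℝ) / d) * (u n ξ : ℝ) -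
            u₀ (fun i => (n : ℝ) ^ (-(1 : ℝ) / d) * (ξ i : ℝ))| ≤ ε) :
    ∀ e ∈ dirNR d, ∀ x1 x2 : Fin d → ℝ, x1 ≠ 0 → x2 ≠ 0 →
      (∃ t : ℝ, t ≠ 0 ∧ x1 - x2 = t • e) →
      renorm x1 ≤ renorm x2 → u₀ x2 ≤ u₀ x1 := by
  intro e he x1 x2 hx1 hx2 hmul hren
  obtain ⟨t, ht, hsub⟩ := hmul
  obtain ⟨i, j, hij, hcase⟩ := he
  have hsq : ∑ l, x1 l ^ 2 ≤ ∑ l, x2 l ^ 2 := by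
    by_contra hlt
    push_neg at hlt
    have h2 := Real.sqrt_lt_sqrt (by positivity) hlt
    unfold renorm at hren
    linarith
  rcases hcase with hcase | hcase | hcase
  · -- e = Pi.single i 1
    subst hcase
    have hci : x1 i = x2 i + t := by
      have h := congrFun hsub i
      simp [Pi.single_apply] at h
      linarith
    have hcne : ∀ l, l ≠ i → x1 l = x2 l := by
      intro l hl
      have h := congrFun hsub l
      simp [Pi.single_apply, hl] at h
      linarith
    have hts : t * (x1 i + x2 i) ≤ 0 := by
      have hsum : ∑ l, (x1 l ^ 2 - x2 l ^ 2) = x1 i ^ 2 - x2 i ^ 2 := by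
        apply Finset.sum_eq_single_of_mem i (Finset.mem_univ i)
        intro b _ hb
        rw [hcne b hb]; ring
      rw [Finset.sum_sub_distrib] at hsum
      have hid : t * (x1 i + x2 i) = x1 i ^ 2 - x2 i ^ 2 := by rw [hci]; ring
      linarith
    exact caseA hd u hu hleast u₀ hcont hconv i x1 x2 hx1 hx2 t ht hci hcne hts
  · -- e = Pi.single i 1 + Pi.single j 1
    subst hcase
    have hci : x1 i = x2 i + t := by
      have h := congrFun hsub i
      simp [Pi.single_apply, hij] at h
      linarith
    have hcj : x1 j = x2 j + t := by
      have h := congrFun hsub j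
      simp [Pi.single_apply, Ne.symm hij] at h
      linarith
    have hcne : ∀ l, l ≠ i → l ≠ j → x1 l = x2 l := by
      intro l hli hlj
      have h := congrFun hsub l
      simp [Pi.single_apply, hli, hlj] at h
      linarith
    have hts : t * (x1 i + x2 i + x1 j + x2 j) ≤ 0 := by
      have h1 : ∑ l ∈ ({i, j} : Finset (Fin d)), (x1 l ^ 2 - x2 l ^ 2) =
          ∑ l, (x1 l ^ 2 - x2 l ^ 2) := by
        apply Finset.sum_subset (Finset.subset_univ _)
        intro b _ hb
        simp only [Finset.mem_insert, Finset.mem_singleton] at hb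
        push_neg at hb
        rw [hcne b hb.1 hb.2]; ring
      rw [Finset.sum_pair hij] at h1
      rw [Finset.sum_sub_distrib] at h1
      have hid : t * (x1 i + x2 i + x1 j + x2 j) =
          (x1 i ^ 2 - x2 i ^ 2) + (x1 j ^ 2 - x2 j ^ 2) := by
        rw [hci, hcj]; ring
      linarith
    exact caseC hd u hu hleast u₀ hcont hconv i j hij x1 x2 hx1 hx2 t ht hci hcj hcne hts
  · -- e = Pi.single i 1 - Pi.single j 1
    subst hcase
    have hci : x1 i = x2 i + t := by
      have h := congrFun hsub i
      simp [Pi.single_apply, hij] at h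
      linarith
    have hcj : x1 j = x2 j - t := by
      have h := congrFun hsub j
      simp [Pi.single_apply, Ne.symm hij] at h
      linarith
    have hcne : ∀ l, l ≠ i → l ≠ j → x1 l = x2 l := by
      intro l hli hlj
      have h := congrFun hsub l
      simp [Pi.single_apply, hli, hlj] at h
      linarith
    have hts : t * (x1 i + x2 i - x1 j - x2 j) ≤ 0 := by
      have h1 : ∑ l ∈ ({i, j} : Finset (Fin d)), (x1 l ^ 2 - x2 l ^ 2) =
          ∑ l, (x1 l ^ 2 - x2 l ^ 2) := by
        apply Finset.sum_subset (Finset.subset_univ _)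
        intro b _ hb
        simp only [Finset.mem_insert, Finset.mem_singleton] at hb
        push_neg at hb
        rw [hcne b hb.1 hb.2]; ring
      rw [Finset.sum_pair hij] at h1
      rw [Finset.sum_sub_distrib] at h1
      have hid : t * (x1 i + x2 i - x1 j - x2 j) =
          (x1 i ^ 2 - x2 i ^ 2) + (x1 j ^ 2 - x2 j ^ 2) := by
        rw [hci, hcj]; ring
      linarith
    exact caseB hd u hu hleast u₀ hcont hconv i j hij x1 x2 hx1 hx2 t ht hci hcj hcne hts


end Sandpile
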